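/- For every prime power q there exists a symmetric matrix g ∈ GL(3, F_q) (i.e., gᵀ = g) whose multiplicative order in GL(3, F_q) is exactly q³ − 1. -/

import Mathlib

open scoped Matrix MatrixGroups
open Polynomial Module

set_option linter.unusedSectionVars false
set_option linter.unnecessarySimpa false
set_option maxHeartbeats 1000000

lemma natDegree_X_pow_sub_X' {K : Type*} [Field K] {m : ℕ} (hm : 1 < m) :
    (X ^ m - X : K[X]).natDegree = m := by
  have hdeg : (X ^ m - X : K[X]).degree = m := by
    rw [degree_sub_eq_left_of_degree_lt, degree_X_pow]
    rw [degree_X_pow, degree_X]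
    exact_mod_cast hm
  exact natDegree_eq_of_degree_eq_some hdeg

section Aux

variable {F L : Type*} [Field F] [Fintype F] [Field L] [Algebra F L] [FiniteDimensional F L]

lemma binary_universal (hodd : Fintype.card F % 2 = 1) {a b : F} (ha : a ≠ 0) (hb : b ≠ 0) :
    ∃ x y : F, a * x ^ 2 + b * y ^ 2 = 1 := by
  have hdf : (C a * X ^ 2 : F[X]).degree = 2 := by
    rw [degree_C_mul (by exact_mod_cast ha), degree_X_pow]; rfl
  have hdg : (C b * X ^ 2 - C 1 : F[X]).degree = 2 := by
    rw [degree_sub_eq_left_of_degree_lt, degree_C_mul (by exact_mod_cast hb), degree_X_pow]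
    · rfl
    rw [degree_C_mul (by exact_mod_cast hb), degree_X_pow]
    exact lt_of_le_of_lt (degree_C_le) (by norm_num)
  obtain ⟨x, y, h⟩ := FiniteField.exists_root_sum_quadratic hdf hdg hodd
  refine ⟨x, y, ?_⟩
  simp only [eval_add, eval_mul, eval_pow, eval_X, eval_C, eval_sub, eval_one] at h
  linear_combination h

lemma ind_triple (B : LinearMap.BilinForm F L) (hsymm : ∀ x y, B x y = B y x)
    {w : Fin 3 → L} (h00 : B (w 0) (w 0) = 1) (h11 : B (w 1) (w 1) = 1)
    (h01 : B (w 0) (w 1) = 0) (h02 : B (w 0) (w 2) = 0) (h12 : B (w 1) (w 2) = 0)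
    (hw2 : w 2 ≠ 0) : LinearIndependent F w := by
  rw [Fintype.linearIndependent_iff]
  intro g hg
  have key : ∀ u : L, B (∑ i, g i • w i) u = ∑ i, g i * B (w i) u := by
    intro u
    simp [Fin.sum_univ_three, smul_eq_mul]
  have e0 : g 0 = 0 := by
    have := key (w 0); rw [hg] at this
    simpa [Fin.sum_univ_three, h00, h01, h02, hsymm (w 1) (w 0), hsymm (w 2) (w 0)] using this.symm
  have e1 : g 1 = 0 := by
    have := key (w 1); rw [hg] at this
    simpa [Fin.sum_univ_three, h11, h01, h12, hsymm (w 2) (w 1)] using this.symm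
  have e2 : g 2 = 0 := by
    have h2 : g 2 • w 2 = 0 := by
      have := hg
      rw [Fin.sum_univ_three, e0, e1] at this
      simpa using this
    rcases smul_eq_zero.mp h2 with h | h
    · exact h
    · exact absurd h hw2
  intro i; fin_cases i <;> assumption

lemma selfdual_of_triple (h3 : finrank F L = 3) (c₀ : F) (w : Fin 3 → L)
    (h : ∀ i j, c₀ * Algebra.trace F L (w i * w j) = if i = j then 1 else 0) :
    ∃ (c : L) (e : Basis (Fin 3) F L), ∀ i j,
      Algebra.trace F L (c * (e i * e j)) = if i = j then (1 : F) else 0 := by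
  set T := c₀ • (Algebra.traceForm F L) with hT
  have hTval : ∀ x y : L, T x y = c₀ * Algebra.trace F L (x * y) := by
    intro x y
    simp [hT, Algebra.traceForm_apply, smul_eq_mul]
  have hsymm : ∀ x y, T x y = T y x := by
    intro x y; rw [hTval, hTval, mul_comm x y]
  have hw2 : w 2 ≠ 0 := by
    intro hz
    have := h 2 2
    rw [hz] at this
    simp at this
  have hind : LinearIndependent F w := by
    refine ind_triple T hsymm ?_ ?_ ?_ ?_ ?_ hw2 <;> rw [hTval] <;>
      first
        | simpa using h 0 0
        | simpa using h 1 1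
        | simpa using h 0 1
        | simpa using h 0 2
        | simpa using h 1 2
  have hcard : Fintype.card (Fin 3) = finrank F L := by simp [h3]
  refine ⟨algebraMap F L c₀, basisOfLinearIndependentOfCardEqFinrank hind hcard, ?_⟩
  intro i j
  rw [coe_basisOfLinearIndependentOfCardEqFinrank]
  calc Algebra.trace F L (algebraMap F L c₀ * (w i * w j))
      = Algebra.trace F L (c₀ • (w i * w j)) := by rw [Algebra.smul_def]
    _ = c₀ * Algebra.trace F L (w i * w j) := by rw [map_smul, smul_eq_mul]
    _ = _ := h i j

lemma sq_surj_of_char_two (K : Type*) [Field K] [Finite K] [CharP K 2] (t : K) :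
    ∃ u : K, u ^ 2 = t := by
  have hinj : Function.Injective (fun u : K => u ^ 2) := by
    intro u v h
    have h' : u ^ 2 = v ^ 2 := h
    have h2 : (2 : K) = 0 := CharTwo.two_eq_zero
    have hz : (u - v) ^ 2 = 0 := by linear_combination h' + (v ^ 2 - u * v) * h2
    have := pow_eq_zero_iff (n := 2) (by norm_num) |>.mp hz
    exact sub_eq_zero.mp this
  exact Finite.injective_iff_surjective.mp hinj t

lemma exists_selfdual_odd (h3 : finrank F L = 3) (hodd : Fintype.card F % 2 = 1) :
    ∃ (c : L) (e : Basis (Fin 3) F L), ∀ i j,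
      Algebra.trace F L (c * (e i * e j)) = if i = j then (1 : F) else 0 := by
  have h2 : (2 : F) ≠ 0 := by
    have hchar : ringChar F ≠ 2 := fun hc =>
      by simp [FiniteField.even_card_iff_char_two.mp hc] at hodd
    intro h20
    exact hchar (((Nat.prime_dvd_prime_iff_eq (CharP.char_is_prime F _) Nat.prime_two).mp
      ((CharP.cast_eq_zero_iff F (ringChar F) 2).mp (by exact_mod_cast h20)))) 
  haveI : Invertible (2 : F) := invertibleOfNonzero h2
  have hTsymm : LinearMap.IsSymm (Algebra.traceForm F L) :=
    LinearMap.BilinForm.isSymm_iff.mp (Algebra.traceForm_isSymm F)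
  obtain ⟨v₀, hv₀⟩ := LinearMap.BilinForm.exists_orthogonal_basis hTsymm
  have hnd : (Algebra.traceForm F L).Nondegenerate := traceForm_nondegenerate F L
  -- reindex to Fin 3
  let v : Basis (Fin 3) F L := v₀.reindex (finCongr h3)
  have hv : ∀ i j : Fin 3, i ≠ j → Algebra.traceForm F L (v i) (v j) = 0 := by
    intro i j hij
    have : (finCongr h3).symm i ≠ (finCongr h3).symm j := fun h => hij (by
      simpa using congrArg (finCongr h3) h)
    simpa [v, Module.Basis.reindex_apply] using hv₀ this
  set T := Algebra.traceForm F L with hTdef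
  set d : Fin 3 → F := fun i => T (v i) (v i) with hd
  have hdne : ∀ i, d i ≠ 0 := by
    intro i
    have := LinearMap.BilinForm.iIsOrtho.not_isOrtho_basis_self_of_nondegenerate
      (B := T) (v := v) (fun {i j} hij => hv i j hij) hnd i
    simpa [LinearMap.BilinForm.IsOrtho, hd] using this
  set c₀ : F := d 0 * d 1 * d 2 with hc₀
  have hc₀ne : c₀ ≠ 0 := by
    simp only [hc₀]
    exact mul_ne_zero (mul_ne_zero (hdne 0) (hdne 1)) (hdne 2)
  set a : Fin 3 → F := fun i => c₀ * d i with ha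
  have hane : ∀ i, a i ≠ 0 := fun i => mul_ne_zero hc₀ne (hdne i)
  set Tc := c₀ • T with hTc
  have hTcv : ∀ i j : Fin 3, Tc (v i) (v j) = if i = j then a i else 0 := by
    intro i j
    by_cases hij : i = j
    · subst hij; simp [hTc, ha, hd, smul_eq_mul]
    · simp [hTc, hij, hv i j hij, smul_eq_mul]
  -- bilinearity helpers
  have hadd : ∀ x y z : L, Tc (x + y) z = Tc x z + Tc y z := by intro x y z; simp
  have haddr : ∀ x y z : L, Tc x (y + z) = Tc x y + Tc x z := by intro x y z; simp
  have hsmul : ∀ (r : F) (x z : L), Tc (r • x) z = r * Tc x z := by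
    intro r x z; simp [smul_eq_mul]
  have hsmulr : ∀ (r : F) (x z : L), Tc x (r • z) = r * Tc x z := by
    intro r x z; simp [smul_eq_mul]
    try ring
  obtain ⟨x, y, hxy⟩ := binary_universal hodd (hane 0) (hane 1)
  set e0 : L := x • v 0 + y • v 1 with he0
  set w1 : L := (-(a 1 * y)) • v 0 + (a 0 * x) • v 1 with hw1
  have expand : ∀ (p q r s : F),
      Tc (p • v 0 + q • v 1) (r • v 0 + s • v 1) = p * r * a 0 + q * s * a 1 := by
    intro p q r s
    rw [hadd, hsmul, hsmul, haddr, haddr, hsmulr, hsmulr, hsmulr, hsmulr,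
      hTcv 0 0, hTcv 0 1, hTcv 1 0, hTcv 1 1]
    simp
    try ring
  have expand2 : ∀ (p q : F), Tc (p • v 0 + q • v 1) (v 2) = 0 := by
    intro p q
    rw [hadd, hsmul, hsmul, hTcv 0 2, hTcv 1 2]
    simp
  have h00 : Tc e0 e0 = 1 := by rw [he0, expand]; linear_combination hxy
  have h0w1 : Tc e0 w1 = 0 := by rw [he0, hw1, expand]; ring
  have hw1w1 : Tc w1 w1 = a 0 * a 1 := by
    rw [hw1, expand]; linear_combination (a 0 * a 1)*hxy
  have h0v2 : Tc e0 (v 2) = 0 := by rw [he0, expand2]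
  have hw1v2 : Tc w1 (v 2) = 0 := by rw [hw1, expand2]
  obtain ⟨x', y', hxy'⟩ := binary_universal hodd (mul_ne_zero (hane 0) (hane 1)) (hane 2)
  set e1 : L := x' • w1 + y' • v 2 with he1
  set w2 : L := (-(a 2 * y')) • w1 + ((a 0 * a 1) * x') • v 2 with hw2
  have expandB : ∀ (p q r s : F),
      Tc (p • w1 + q • v 2) (r • w1 + s • v 2)
        = p * r * (a 0 * a 1) + q * s * a 2 := by
    intro p q r s
    have hv2w1 : Tc (v 2) w1 = 0 := by
      rw [hw1, haddr, hsmulr, hsmulr, hTcv 2 0, hTcv 2 1]; simp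
    rw [hadd, hsmul, hsmul, haddr, haddr, hsmulr, hsmulr, hsmulr, hsmulr,
      hw1w1, hw1v2, hv2w1, hTcv 2 2]
    simp
    try ring
  have h11 : Tc e1 e1 = 1 := by rw [he1, expandB]; linear_combination hxy'
  have h1w2 : Tc e1 w2 = 0 := by rw [he1, hw2, expandB]; ring
  have hw2w2 : Tc w2 w2 = c₀ ^ 4 := by
    rw [hw2, expandB]
    have : a 0 * a 1 * a 2 = c₀ ^ 4 := by
      simp only [ha, hc₀]; ring
    linear_combination (a 0 * a 1 * a 2) * hxy' + this
  have h0e1 : Tc e0 e1 = 0 := by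
    rw [he1, haddr, hsmulr, hsmulr, h0w1, h0v2]; ring
  have h0w2 : Tc e0 w2 = 0 := by
    rw [hw2, haddr, hsmulr, hsmulr, h0w1, h0v2]; ring
  set e2 : L := ((c₀ ^ 2)⁻¹ : F) • w2 with he2
  have h22 : Tc e2 e2 = 1 := by
    rw [he2, hsmul, hsmulr, hw2w2]
    field_simp
  have h02 : Tc e0 e2 = 0 := by rw [he2, hsmulr, h0w2]; ring
  have h12 : Tc e1 e2 = 0 := by rw [he2, hsmulr, h1w2]; ring
  -- package
  refine selfdual_of_triple h3 c₀ ![e0, e1, e2] ?_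
  have key : ∀ z w : L, c₀ * Algebra.trace F L (z * w) = Tc z w := by
    intro z w
    simp [hTc, hTdef, Algebra.traceForm_apply, smul_eq_mul]
  have hsym : ∀ z w : L, Tc z w = Tc w z := by
    intro z w
    simp [hTc, hTdef, Algebra.traceForm_apply, smul_eq_mul, mul_comm z w]
  have h10 : Tc e1 e0 = 0 := by rw [hsym e1 e0]; exact h0e1
  have h20 : Tc e2 e0 = 0 := by rw [hsym e2 e0]; exact h02
  have h21 : Tc e2 e1 = 0 := by rw [hsym e2 e1]; exact h12
  intro i j
  fin_cases i <;> fin_cases j <;>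
    simp only [Matrix.cons_val_zero, Matrix.cons_val_one, Matrix.head_cons, key,
      Matrix.cons_val_two, Matrix.tail_cons, if_true, if_false] <;>
    first
      | simpa using h00 | simpa using h11 | simpa using h22
      | simpa using h0e1 | simpa using h02 | simpa using h12
      | simpa using h10 | simpa using h20 | simpa using h21

lemma exists_selfdual_even (h3 : finrank F L = 3) (hchar : CharP F 2) :
    ∃ (c : L) (e : Basis (Fin 3) F L), ∀ i j,
      Algebra.trace F L (c * (e i * e j)) = if i = j then (1 : F) else 0 := by
  haveI := hchar
  haveI : CharP L 2 := charP_of_injective_algebraMap' F 2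
  haveI : Finite L := Module.finite_of_finite F  -- ??
  have hone : (1 : F) + 1 = 0 := by
    rw [one_add_one_eq_two]; exact CharTwo.two_eq_zero
  set T := Algebra.traceForm F L with hTdef
  have hnd : T.Nondegenerate := traceForm_nondegenerate F L
  have hsym : ∀ z w : L, T z w = T w z := by
    intro z w; simp [hTdef, Algebra.traceForm_apply, mul_comm z w]
  have happ : ∀ z w : L, T z w = Algebra.trace F L (z * w) := fun z w =>
    Algebra.traceForm_apply F z w
  -- a vector of norm 1
  have h1 : ∃ t : L, Algebra.trace F L t = 1 := by
    have hne : ¬ ∀ w, T 1 w = 0 := fun h => one_ne_zero (hnd.1 1 h)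
    push_neg at hne
    obtain ⟨y, hy⟩ := hne
    rw [happ, one_mul] at hy
    exact ⟨(Algebra.trace F L y)⁻¹ • y, by rw [map_smul, smul_eq_mul, inv_mul_cancel₀ hy]⟩
  obtain ⟨t, ht⟩ := h1
  obtain ⟨u, hu⟩ := sq_surj_of_char_two L t
  have he00 : T u u = 1 := by rw [happ, ← sq, hu, ht]
  -- kernel dimension tool
  have hker : ∀ z : L, T z z = 1 → finrank F (LinearMap.ker (T z)) = 2 := by
    intro z hz
    have hsurj : Function.Surjective (T z) := fun x =>
      ⟨x • z, by rw [map_smul, hz, smul_eq_mul, mul_one]⟩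
    have h := LinearMap.finrank_range_add_finrank_ker (T z)
    rw [LinearMap.range_eq_top.mpr hsurj, h3, finrank_top, Module.finrank_self] at h
    omega
  have hker_ne : ∀ p : Submodule F L, 0 < finrank F p → ∃ z ∈ p, z ≠ 0 := by
    intro p hp
    apply Submodule.exists_mem_ne_zero_of_ne_bot
    intro hbot
    rw [hbot, finrank_bot] at hp
    omega
  by_cases hcase : ∃ y, T u y = 0 ∧ T y y ≠ 0
  · -- Case A
    obtain ⟨y, hy0, hyy⟩ := hcase
    obtain ⟨s, hs⟩ := sq_surj_of_char_two F (T y y)⁻¹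
    set e1 : L := s • y with he1def
    have he11 : T e1 e1 = 1 := by
      rw [he1def]
      simp only [map_smul, LinearMap.smul_apply, smul_eq_mul]
      rw [← mul_assoc, ← sq, hs, inv_mul_cancel₀ hyy]
    have he01 : T u e1 = 0 := by
      rw [he1def, map_smul, smul_eq_mul, hy0, mul_zero]
    have hint : 0 < finrank F ↥(LinearMap.ker (T u) ⊓ LinearMap.ker (T e1)) := by
      have hsup := Submodule.finrank_le (LinearMap.ker (T u) ⊔ LinearMap.ker (T e1))
      have heq := Submodule.finrank_sup_add_finrank_inf_eq
        (LinearMap.ker (T u)) (LinearMap.ker (T e1))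
      rw [hker u he00, hker e1 he11, h3] at *
      omega
    obtain ⟨z, hzmem, hzne⟩ := hker_ne _ hint
    have hz0 : T u z = 0 := LinearMap.mem_ker.mp hzmem.1
    have hz1 : T e1 z = 0 := LinearMap.mem_ker.mp hzmem.2
    have hzz : T z z ≠ 0 := by
      intro h0
      have hind : LinearIndependent F ![u, e1, z] := by
        refine ind_triple T hsym ?_ ?_ ?_ ?_ ?_ (by simpa using hzne) <;> simpa [he00, he11, he01, hz0, hz1]
      apply hzne
      apply hnd.1 z
      intro w
      have hcard3 : Fintype.card (Fin 3) = finrank F L := by simp [h3]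
      set b := basisOfLinearIndependentOfCardEqFinrank hind hcard3 with hb
      have hcoe : ⇑b = ![u, e1, z] :=
        coe_basisOfLinearIndependentOfCardEqFinrank hind hcard3
      have hb0 : b 0 = u := by rw [hcoe]; rfl
      have hb1 : b 1 = e1 := by rw [hcoe]; rfl
      have hb2 : b 2 = z := by rw [hcoe]; rfl
      rw [← b.sum_repr w, map_sum, Fin.sum_univ_three]
      simp only [map_smul, smul_eq_mul]
      rw [hb0, hb1, hb2, hsym z u, hsym z e1, hz0, hz1, h0]
      ring
    obtain ⟨s', hs'⟩ := sq_surj_of_char_two F (T z z)⁻¹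
    set e2 : L := s' • z with he2def
    have he22 : T e2 e2 = 1 := by
      rw [he2def]
      simp only [map_smul, LinearMap.smul_apply, smul_eq_mul]
      rw [← mul_assoc, ← sq, hs', inv_mul_cancel₀ hzz]
    have he02 : T u e2 = 0 := by rw [he2def, map_smul, smul_eq_mul, hz0, mul_zero]
    have he12 : T e1 e2 = 0 := by rw [he2def, map_smul, smul_eq_mul, hz1, mul_zero]
    refine selfdual_of_triple h3 1 ![u, e1, e2] ?_
    intro i j
    have h10 : T e1 u = 0 := by rw [hsym]; exact he01
    have h20 : T e2 u = 0 := by rw [hsym]; exact he02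
    have h21 : T e2 e1 = 0 := by rw [hsym]; exact he12
    fin_cases i <;> fin_cases j <;>
      simp only [Matrix.cons_val_zero, Matrix.cons_val_one, Matrix.head_cons,
        Matrix.cons_val_two, Matrix.tail_cons, one_mul, ← happ] <;>
      simp [he00, he11, he22, he01, he02, he12, h10, h20, h21]
  · -- Case B
    push_neg at hcase
    obtain ⟨u', hu'mem, hu'ne⟩ := hker_ne (LinearMap.ker (T u)) (by rw [hker u he00]; omega)
    have hu'0 : T u u' = 0 := LinearMap.mem_ker.mp hu'mem
    have huu' : T u' u' = 0 := hcase u' hu'0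
    have hv0ex : ¬ ∀ w, T u' w = 0 := fun h => hu'ne (hnd.1 u' h)
    push_neg at hv0ex
    obtain ⟨v₀, hv₀⟩ := hv0ex
    set v₁ : L := v₀ - (T u v₀) • u with hv₁def
    have hv₁0 : T u v₁ = 0 := by
      rw [hv₁def, map_sub, map_smul, smul_eq_mul, he00, mul_one, sub_self]
    have hu'v₁ : T u' v₁ ≠ 0 := by
      rw [hv₁def, map_sub, map_smul, smul_eq_mul, hsym u' u, hu'0, mul_zero, sub_zero]
      exact hv₀
    set v : L := (T u' v₁)⁻¹ • v₁ with hvdef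
    have hv0 : T u v = 0 := by rw [hvdef, map_smul, smul_eq_mul, hv₁0, mul_zero]
    have hu'v : T u' v = 1 := by
      rw [hvdef, map_smul, smul_eq_mul, inv_mul_cancel₀ hu'v₁]
    have hvv : T v v = 0 := hcase v hv0
    have hvu' : T v u' = 1 := by rw [hsym]; exact hu'v
    have hu'u : T u' u = 0 := by rw [hsym]; exact hu'0
    have hvu : T v u = 0 := by rw [hsym]; exact hv0
    set f0 : L := u + u' with hf0
    set f1 : L := u + v with hf1
    set f2 : L := u + u' + v with hf2
    have expand : ∀ x y z w : L, T (x + y) (z + w) = T x z + T x w + T y z + T y w := by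
      intro x y z w; simp [map_add]; ring
    have hf00 : T f0 f0 = 1 := by rw [hf0, expand, he00, hu'0, hu'u, huu']; ring
    have hf11 : T f1 f1 = 1 := by rw [hf1, expand, he00, hv0, hvu, hvv]; ring
    have hf01 : T f0 f1 = 0 := by
      rw [hf0, hf1, expand, he00, hv0, hu'u, hu'v]; linear_combination hone
    have expandv : ∀ x y z w t : L,
        T (x + y) (z + w + t) = T x z + T x w + T x t + T y z + T y w + T y t := by
      intro x y z w t; simp [map_add]; ring
    have expandvv : ∀ x y z a b c : L,
        T (x + y + z) (a + b + c) = T x a + T x b + T x c + T y a + T y b + T y c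
          + T z a + T z b + T z c := by
      intro x y z a b c; simp [map_add]; ring
    have hf02 : T f0 f2 = 0 := by
      rw [hf0, hf2, expandv, he00, hu'0, hv0, hu'u, huu', hu'v]
      linear_combination hone
    have hf12 : T f1 f2 = 0 := by
      rw [hf1, hf2, expandv, he00, hu'0, hv0, hvu, hvu', hvv]
      linear_combination hone
    have hf22 : T f2 f2 = 1 := by
      rw [hf2, expandvv, he00, hu'0, hv0, hu'u, huu', hu'v, hvu, hvu', hvv]
      linear_combination hone
    have hf10 : T f1 f0 = 0 := by rw [hsym]; exact hf01
    have hf20 : T f2 f0 = 0 := by rw [hsym]; exact hf02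
    have hf21 : T f2 f1 = 0 := by rw [hsym]; exact hf12
    refine selfdual_of_triple h3 1 ![f0, f1, f2] ?_
    intro i j
    fin_cases i <;> fin_cases j <;>
      simp only [Matrix.cons_val_zero, Matrix.cons_val_one, Matrix.head_cons,
        Matrix.cons_val_two, Matrix.tail_cons, one_mul, ← happ] <;>
      simp [hf00, hf11, hf22, hf01, hf02, hf12, hf10, hf20, hf21]


lemma exists_selfdual (h3 : finrank F L = 3) :
    ∃ (c : L) (e : Basis (Fin 3) F L), ∀ i j,
      Algebra.trace F L (c * (e i * e j)) = if i = j then (1 : F) else 0 := by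
  rcases Nat.mod_two_eq_zero_or_one (Fintype.card F) with h | h
  · have hr2 : ringChar F = 2 := FiniteField.even_card_iff_char_two.mpr h
    have hc : CharP F (ringChar F) := ringChar.charP F
    rw [hr2] at hc
    exact exists_selfdual_even h3 hc
  · exact exists_selfdual_odd h3 h

end Aux

/-- For every prime power `q` there is a symmetric matrix in `GL(3, F_q)` of
multiplicative order exactly `q ^ 3 - 1`. -/
theorem exists_symmetric_singer_cycle
    (q : ℕ) (hq : IsPrimePow q)
    (F : Type*) [Field F] [Fintype F] (hF : Fintype.card F = q) :
    ∃ g : GL (Fin 3) F,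
      ((g : Matrix (Fin 3) (Fin 3) F))ᵀ = (g : Matrix (Fin 3) (Fin 3) F) ∧
        orderOf g = q ^ 3 - 1 := by
  classical
  have hq2 : 2 ≤ q := hq.two_le
  obtain ⟨p, n, hp, hn, hpq⟩ := hq
  have hp' : p.Prime := hp.nat_prime
  haveI : Fact p.Prime := ⟨hp'⟩
  have hrp : ringChar F = p := by
    obtain ⟨m, hprime, hcard⟩ := FiniteField.card F (ringChar F)
    have hdvd : p ∣ ringChar F ^ (m : ℕ) := by
      rw [← hcard, hF, ← hpq]
      exact dvd_pow_self p hn.ne'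
    exact ((Nat.prime_dvd_prime_iff_eq hp' hprime).mp (hp'.dvd_of_dvd_pow hdvd)).symm
  have hcharF : CharP F p := by
    have := ringChar.charP F
    rwa [hrp] at this
  have hq3 : 1 < q ^ 3 := Nat.one_lt_pow (by norm_num) (by omega)
  set f : F[X] := X ^ (q ^ 3) - X with hfdef
  let L := f.SplittingField
  haveI : Finite L := Module.finite_of_finite F
  haveI : Fintype L := Fintype.ofFinite L
  haveI hcharL : CharP L p := charP_of_injective_algebraMap' F p
  have hpq3 : p ∣ q ^ 3 := by
    refine dvd_trans ?_ (dvd_pow_self q (by norm_num))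
    rw [← hpq]; exact dvd_pow_self p hn.ne'
  -- every element of L satisfies x ^ q ^ 3 = x
  have hfL : ∀ x : L, x ^ (q ^ 3) = x := by
    have hq3p : q ^ 3 = p ^ (3 * n) := by rw [← hpq, ← pow_mul, Nat.mul_comm]
    let S : Subalgebra F L :=
      { carrier := {x | x ^ (q ^ 3) = x}
        one_mem' := by simp [Set.mem_setOf_eq]
        zero_mem' := by simp [Set.mem_setOf_eq, zero_pow (by positivity : q ^ 3 ≠ 0)]
        mul_mem' := by
          intro x y hx hy
          simp only [Set.mem_setOf_eq] at *
          rw [mul_pow, hx, hy]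
        add_mem' := by
          intro x y hx hy
          simp only [Set.mem_setOf_eq] at *
          rw [hq3p, add_pow_char_pow, ← hq3p, hx, hy]
        algebraMap_mem' := fun a => by
          simp only [Set.mem_setOf_eq]
          rw [← map_pow]
          congr 1
          calc a ^ q ^ 3 = a ^ (Fintype.card F) ^ 3 := by rw [hF]
            _ = a := FiniteField.pow_card_pow 3 a }
    have hroot : f.rootSet L ⊆ S := by
      intro x hx
      rw [mem_rootSet] at hx
      have h2 := hx.2
      simp only [hfdef, map_sub, map_pow, aeval_X] at h2
      show x ^ (q ^ 3) = x
      linear_combination h2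
    have htop : Algebra.adjoin F (f.rootSet L) = ⊤ := IsSplittingField.adjoin_rootSet L f
    have hle : (⊤ : Subalgebra F L) ≤ S := htop ▸ Algebra.adjoin_le hroot
    exact fun x => hle (Algebra.mem_top)
  have hcardle : Fintype.card L ≤ q ^ 3 := by
    set g : L[X] := X ^ (q ^ 3) - X with hgdef
    have hg0 : g ≠ 0 := FiniteField.X_pow_card_sub_X_ne_zero L hq3
    have hsub : (Finset.univ : Finset L) ⊆ g.roots.toFinset := by
      intro x _
      rw [Multiset.mem_toFinset, mem_roots hg0]
      simp [hgdef, IsRoot, hfL x]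
    calc Fintype.card L = (Finset.univ : Finset L).card := rfl
      _ ≤ g.roots.toFinset.card := Finset.card_le_card hsub
      _ ≤ Multiset.card g.roots := Multiset.toFinset_card_le _
      _ ≤ g.natDegree := Polynomial.card_roots' g
      _ = q ^ 3 := natDegree_X_pow_sub_X' hq3
  have hsep : f.Separable := galois_poly_separable p (q ^ 3) hpq3
  have hsplit : Splits (f.map (algebraMap F L)) := IsSplittingField.splits L f
  have hcardge : q ^ 3 ≤ Fintype.card L := by
    have hcnt := card_rootSet_eq_natDegree hsep hsplit
    rw [natDegree_X_pow_sub_X' hq3] at hcnt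
    have hle : Fintype.card ↥(f.rootSet L) ≤ Fintype.card L :=
      Fintype.card_le_of_injective _ Subtype.val_injective
    omega
  have hcard : Fintype.card L = q ^ 3 := le_antisymm hcardle hcardge
  have h3 : finrank F L = 3 := by
    have hb := Module.finBasis F L
    have hpow := Module.card_fintype hb
    rw [Fintype.card_fin, hF, hcard] at hpow
    exact (Nat.pow_right_injective hq2 hpow.symm)
  obtain ⟨c, e, he⟩ := exists_selfdual h3
  let φ : L →ₐ[F] Matrix (Fin 3) (Fin 3) F :=
    (LinearMap.toMatrixAlgEquiv e).toAlgHom.comp (Algebra.lmul F L)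
  have hφinj : Function.Injective φ := by
    intro x y hxy
    apply Algebra.lmul_injective (R := F)
    exact (LinearMap.toMatrixAlgEquiv e).injective hxy
  have hentry : ∀ (z : L) i j,
      φ z i j = Algebra.trace F L (c * (e i * (z * e j))) := by
    intro z i j
    have h1 : φ z i j = e.repr (z * e j) i := by
      simp [φ, LinearMap.toMatrixAlgEquiv_apply]
    rw [h1]
    conv_rhs => rw [(e.sum_repr (z * e j)).symm]
    rw [Finset.mul_sum]
    simp only [Finset.mul_sum, mul_smul_comm, map_sum, map_smul, smul_eq_mul]
    simp [he, mul_ite, mul_one, mul_zero, Finset.sum_ite_eq]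
  have hsymmat : ∀ z : L, (φ z)ᵀ = φ z := by
    intro z
    ext i j
    rw [Matrix.transpose_apply, hentry, hentry]
    congr 2
    ring
  obtain ⟨ζ, hζ⟩ := IsCyclic.exists_generator (α := Lˣ)
  refine ⟨Units.map φ.toRingHom.toMonoidHom ζ, ?_, ?_⟩
  · show (↑(Units.map φ.toRingHom.toMonoidHom ζ) : Matrix (Fin 3) (Fin 3) F)ᵀ = _
    rw [Units.coe_map]
    exact hsymmat ζ
  · rw [orderOf_injective (Units.map φ.toRingHom.toMonoidHom)
      (Units.map_injective hφinj) ζ]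
    rw [orderOf_eq_card_of_forall_mem_zpowers hζ, Nat.card_eq_fintype_card,
      Fintype.card_units, hcard]
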